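/- Fix a sufficiently small ε > 0 and α ∈ (0,1/2) with |α·ln α + (1−α)·ln(1−α)| < ε, and set t₂ = ⌊(1/ln 2 + 3ε)·ln ln n⌋. Fix a set Y ⊆ [n] of size y ≥ (ln n)^{2+3ε}·√n. For n large enough, the probability that in G(n,1/2) the number of vertices v ∈ [n]∖Y with |N₀(v,Y)| ≤ α·y exceeds t₂ is at most e^{−(1+ε/2)·y·ln ln n}. -/

import Mathlib

open MeasureTheory Filter Real
open scoped Classical ENNReal

noncomputable section

instance (n : ℕ) : MeasurableSpace (SimpleGraph (Fin n)) := ⊤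

/-- The number of edges of a graph on `Fin n`. -/
noncomputable def edgeCount {n : ℕ} (G : SimpleGraph (Fin n)) : ℕ := Nat.card G.edgeSet

/-- The binomial random graph measure `G(n,p)`: a graph with `e` edges receives
probability `p ^ e * (1 - p) ^ (C(n,2) - e)`. -/
noncomputable def gnp (n : ℕ) (p : ℝ) : Measure (SimpleGraph (Fin n)) :=
  ∑ G : SimpleGraph (Fin n),
    (ENNReal.ofReal (p ^ edgeCount G * (1 - p) ^ (n.choose 2 - edgeCount G))) •
      MeasureTheory.Measure.dirac G

/-- `K` is an inclusion-maximal clique of `G`. -/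
def IsMaxClique {n : ℕ} (G : SimpleGraph (Fin n)) (K : Finset (Fin n)) : Prop :=
  G.IsClique (K : Set (Fin n)) ∧
    ∀ K' : Finset (Fin n), G.IsClique (K' : Set (Fin n)) → K ⊆ K' → K' = K

/-- A clique coloring: no inclusion-maximal clique with at least two vertices is
monochromatic. -/
def IsCliqueColoring {n : ℕ} {α : Type*} (G : SimpleGraph (Fin n)) (c : Fin n → α) : Prop :=
  ∀ K : Finset (Fin n), IsMaxClique G K → 2 ≤ K.card → ¬ ∀ u ∈ K, ∀ w ∈ K, c u = c w

/-- The clique chromatic number. -/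
noncomputable def cliqueChromaticNumber {n : ℕ} (G : SimpleGraph (Fin n)) : ℕ :=
  sInf {s : ℕ | ∃ c : Fin n → Fin s, IsCliqueColoring G c}

/-- `N₀(v, Y)`: the set of non-neighbors of `v` inside `Y`. -/
noncomputable def nonNbrs {n : ℕ} (G : SimpleGraph (Fin n)) (v : Fin n) (Y : Finset (Fin n)) :
    Finset (Fin n) :=
  Y.filter (fun u => u ≠ v ∧ ¬ G.Adj v u)

/-- `N₀(v₁, …, v_j)`: the set of common non-neighbors of `v₁, …, v_j`. -/
noncomputable def commonNonNbrs {n j : ℕ} (G : SimpleGraph (Fin n)) (v : Fin j → Fin n) :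
    Finset (Fin n) :=
  Finset.univ.filter (fun u => ∀ i, u ≠ v i ∧ ¬ G.Adj (v i) u)


lemma edgeCount_le {n : ℕ} (G : SimpleGraph (Fin n)) : edgeCount G ≤ n.choose 2 := by
  have : edgeCount G = G.edgeFinset.card := by
    rw [edgeCount, SimpleGraph.edgeFinset_card, Nat.card_eq_fintype_card]
  rw [this]
  simpa using SimpleGraph.card_edgeFinset_le_card_choose_two (G := G)

lemma gnp_half_apply {n : ℕ} (S : Set (SimpleGraph (Fin n))) :
    gnp n (1/2) S =
      (Finset.univ.filter (· ∈ S)).card * ENNReal.ofReal ((1/2 : ℝ)^(n.choose 2)) := by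
  rw [gnp, MeasureTheory.Measure.finset_sum_apply]
  have hw : ∀ G : SimpleGraph (Fin n),
      ((1:ℝ)/2) ^ edgeCount G * (1 - 1/2) ^ (n.choose 2 - edgeCount G)
        = (1/2 : ℝ) ^ (n.choose 2) := by
    intro G
    have h1 : (1 - (1:ℝ)/2) = 1/2 := by norm_num
    rw [h1, ← pow_add, Nat.add_sub_cancel' (edgeCount_le G)]
  calc (∑ G : SimpleGraph (Fin n),
        (ENNReal.ofReal ((1/2 : ℝ) ^ edgeCount G * (1 - 1/2) ^ (n.choose 2 - edgeCount G)) •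
          MeasureTheory.Measure.dirac G) S)
      = ∑ G : SimpleGraph (Fin n),
          (if G ∈ S then ENNReal.ofReal ((1/2:ℝ)^(n.choose 2)) else 0) := by
        refine Finset.sum_congr rfl fun G _ => ?_
        rw [MeasureTheory.Measure.smul_apply, smul_eq_mul,
          MeasureTheory.Measure.dirac_apply' _ MeasurableSpace.measurableSet_top, hw]
        by_cases h : G ∈ S
        · simp [Set.indicator_of_mem h, h]
        · simp [Set.indicator_of_notMem h, h]
    _ = (Finset.univ.filter (· ∈ S)).card * ENNReal.ofReal ((1/2 : ℝ)^(n.choose 2)) := by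
        rw [Finset.sum_ite, Finset.sum_const_zero, add_zero, Finset.sum_const,
          nsmul_eq_mul]


def H0 {n : ℕ} (T Y : Finset (Fin n)) : SimpleGraph (Fin n) where
  Adj a b := a ≠ b ∧ ¬(a ∈ T ∧ b ∈ Y) ∧ ¬(b ∈ T ∧ a ∈ Y)
  symm := ⟨fun a b h => ⟨h.1.symm, h.2.2, h.2.1⟩⟩
  loopless := ⟨fun a h => h.1 rfl⟩

lemma card_powerset_filter_le {n : ℕ} (Y : Finset (Fin n)) (m : ℕ) :
    (Y.powerset.filter (fun A => A.card ≤ m)).card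
      = ∑ k ∈ Finset.range (m+1), Y.card.choose k := by
  have h : Y.powerset.filter (fun A => A.card ≤ m)
      = (Finset.range (m+1)).biUnion (fun k => Finset.powersetCard k Y) := by
    ext A
    simp [Finset.mem_powersetCard, Finset.mem_filter, Finset.mem_powerset, Nat.lt_succ_iff]
    tauto
  rw [h, Finset.card_biUnion]
  · exact Finset.sum_congr rfl fun k _ => Finset.card_powersetCard k Y
  · intro i hi j hj hij
    simp only [Finset.disjoint_left, Finset.mem_powersetCard]
    rintro A ⟨-, h1⟩ ⟨-, h2⟩
    exact hij (h1.symm.trans h2)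

lemma card_edgeFinset_H0 {n : ℕ} (T Y : Finset (Fin n)) (hTY : ∀ v ∈ T, v ∉ Y) :
    (H0 T Y).edgeFinset.card ≤ n.choose 2 - T.card * Y.card := by
  classical
  set D : Finset (Sym2 (Fin n)) := (T ×ˢ Y).image (fun p => s(p.1, p.2)) with hD
  have hDcard : D.card = T.card * Y.card := by
    rw [hD, Finset.card_image_of_injOn, Finset.card_product]
    rintro ⟨a, b⟩ hab ⟨c, d⟩ hcd h
    simp only [Finset.mem_coe, Finset.mem_product] at hab hcd
    simp only [Sym2.eq_iff] at h
    rcases h with ⟨h1, h2⟩ | ⟨h1, h2⟩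
    · exact Prod.ext h1 h2
    · exact absurd (h1 ▸ hcd.2 : a ∈ Y) (hTY a hab.1)
  have hsub : (H0 T Y).edgeFinset ⊆ (⊤ : SimpleGraph (Fin n)).edgeFinset \ D := by
    intro e he
    rw [SimpleGraph.mem_edgeFinset] at he
    induction e with
    | h a b =>
      obtain ⟨hne, h1, h2⟩ := he
      rw [Finset.mem_sdiff, SimpleGraph.mem_edgeFinset]
      refine ⟨by simpa using hne, ?_⟩
      simp only [hD, Finset.mem_image, Finset.mem_product, Prod.exists]
      rintro ⟨c, d, ⟨hc, hd⟩, hcd⟩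
      rcases Sym2.eq_iff.mp hcd.symm with ⟨rfl, rfl⟩ | ⟨rfl, rfl⟩
      · exact h1 ⟨hc, hd⟩
      · exact h2 ⟨hc, hd⟩
  have hDsub : D ⊆ (⊤ : SimpleGraph (Fin n)).edgeFinset := by
    intro e he
    simp only [hD, Finset.mem_image, Finset.mem_product, Prod.exists] at he
    obtain ⟨a, b, ⟨ha, hb⟩, rfl⟩ := he
    rw [SimpleGraph.mem_edgeFinset]
    simp only [SimpleGraph.top_adj, SimpleGraph.mem_edgeSet]
    exact fun h => hTY a ha (h ▸ hb)
  calc (H0 T Y).edgeFinset.card ≤ ((⊤ : SimpleGraph (Fin n)).edgeFinset \ D).card :=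
        Finset.card_le_card hsub
    _ = (⊤ : SimpleGraph (Fin n)).edgeFinset.card - D.card := Finset.card_sdiff_of_subset hDsub
    _ ≤ n.choose 2 - T.card * Y.card := by
        rw [hDcard, SimpleGraph.card_edgeFinset_top_eq_card_choose_two]
        simp

lemma count_main {n : ℕ} (Y T : Finset (Fin n)) (m : ℕ) (hTY : ∀ v ∈ T, v ∉ Y) :
    (Finset.univ.filter
        (fun G : SimpleGraph (Fin n) => ∀ v ∈ T, (nonNbrs G v Y).card ≤ m)).card
      ≤ (∑ k ∈ Finset.range (m+1), Y.card.choose k)^T.card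
          * 2^(n.choose 2 - T.card * Y.card) := by
  classical
  set B : Finset (Finset (Fin n)) := Y.powerset.filter (fun A => A.card ≤ m) with hB
  set Tgt : Finset ((Fin n → Finset (Fin n)) × Finset (Sym2 (Fin n))) :=
    (Fintype.piFinset (fun v => if v ∈ T then B else {∅})) ×ˢ (H0 T Y).edgeFinset.powerset
    with hTgt
  have key : ∀ (G : SimpleGraph (Fin n)) (v u : Fin n), v ∉ Y → u ∈ Y →
      (G.Adj v u ↔ u ∉ nonNbrs G v Y) := by
    intro G v u hv hu
    have huv : u ≠ v := fun h => hv (h ▸ hu)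
    simp only [nonNbrs, Finset.mem_filter, hu, huv, true_and, not_and, not_not]
    tauto
  have hcard : (Finset.univ.filter
      (fun G : SimpleGraph (Fin n) => ∀ v ∈ T, (nonNbrs G v Y).card ≤ m)).card ≤ Tgt.card := by
    apply Finset.card_le_card_of_injOn
      (fun G => (fun v => if v ∈ T then nonNbrs G v Y else ∅, (G ⊓ H0 T Y).edgeFinset))
    · intro G hG
      rw [Finset.mem_coe, Finset.mem_filter] at hG
      rw [Finset.mem_coe, hTgt, Finset.mem_product]
      constructor
      · rw [Fintype.mem_piFinset]
        intro v
        by_cases hv : v ∈ T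
        · simp only [if_pos hv, hB, Finset.mem_filter, Finset.mem_powerset]
          exact ⟨Finset.filter_subset _ _, hG.2 v hv⟩
        · simp [if_neg hv]
      · rw [Finset.mem_powerset]
        exact SimpleGraph.edgeFinset_mono inf_le_right
    · intro G1 h1 G2 h2 hf
      simp only [Prod.mk.injEq] at hf
      obtain ⟨hfun, hedge⟩ := hf
      have hG12 : G1 ⊓ H0 T Y = G2 ⊓ H0 T Y := SimpleGraph.edgeFinset_inj.mp hedge
      ext a b
      have hnn : ∀ v, v ∈ T → nonNbrs G1 v Y = nonNbrs G2 v Y := by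
        intro v hv
        have := congrFun hfun v
        simpa [if_pos hv] using this
      by_cases hab : a ∈ T ∧ b ∈ Y
      · rw [key G1 a b (hTY a hab.1) hab.2, key G2 a b (hTY a hab.1) hab.2,
          hnn a hab.1]
      · by_cases hba : b ∈ T ∧ a ∈ Y
        · rw [G1.adj_comm a b, G2.adj_comm a b,
            key G1 b a (hTY b hba.1) hba.2, key G2 b a (hTY b hba.1) hba.2, hnn b hba.1]
        · by_cases heq : a = b
          · simp [heq]
          · have hH : (H0 T Y).Adj a b := ⟨heq, hab, hba⟩
            have h3 := congrFun (congrFun (congrArg SimpleGraph.Adj hG12) a) b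
            simp only [SimpleGraph.inf_adj, eq_iff_iff] at h3
            constructor
            · intro h; exact (h3.mp ⟨h, hH⟩).1
            · intro h; exact (h3.mpr ⟨h, hH⟩).1
  refine hcard.trans ?_
  rw [hTgt, Finset.card_product, Fintype.card_piFinset]
  have hprod : (∏ v : Fin n, (if v ∈ T then B else {∅}).card)
      = B.card ^ T.card := by
    calc (∏ v : Fin n, (if v ∈ T then B else {∅}).card)
        = ∏ v : Fin n, (if v ∈ T then B.card else 1) := by
          refine Finset.prod_congr rfl fun v _ => ?_
          by_cases hv : v ∈ T <;> simp [hv]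
      _ = ∏ v ∈ Finset.univ ∩ T, B.card := (Finset.prod_ite_mem _ _ _)
      _ = B.card ^ T.card := by rw [Finset.univ_inter, Finset.prod_const]
  rw [hprod, Finset.card_powerset, hB, card_powerset_filter_le]
  exact Nat.mul_le_mul_left _ (Nat.pow_le_pow_right (by norm_num)
    (card_edgeFinset_H0 T Y hTY))

lemma count_event {n : ℕ} (Y : Finset (Fin n)) (m t : ℕ) :
    (Finset.univ.filter (fun G : SimpleGraph (Fin n) =>
        t ≤ (Finset.univ.filter
          (fun v => v ∉ Y ∧ (nonNbrs G v Y).card ≤ m)).card)).card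
      ≤ n.choose t * ((∑ k ∈ Finset.range (m+1), Y.card.choose k)^t
          * 2^(n.choose 2 - t * Y.card)) := by
  classical
  have hsub : (Finset.univ.filter (fun G : SimpleGraph (Fin n) =>
        t ≤ (Finset.univ.filter
          (fun v => v ∉ Y ∧ (nonNbrs G v Y).card ≤ m)).card))
      ⊆ (Finset.powersetCard t (Finset.univ : Finset (Fin n))).biUnion
        (fun T => Finset.univ.filter
          (fun G : SimpleGraph (Fin n) => ∀ v ∈ T, v ∉ Y ∧ (nonNbrs G v Y).card ≤ m)) := by
    intro G hG
    rw [Finset.mem_filter] at hG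
    obtain ⟨T, hTsub, hTcard⟩ := Finset.exists_subset_card_eq hG.2
    rw [Finset.mem_biUnion]
    refine ⟨T, ?_, ?_⟩
    · rw [Finset.mem_powersetCard]
      exact ⟨Finset.subset_univ _, hTcard⟩
    · rw [Finset.mem_filter]
      refine ⟨Finset.mem_univ _, fun v hv => ?_⟩
      have := hTsub hv
      rw [Finset.mem_filter] at this
      exact this.2
  refine (Finset.card_le_card hsub).trans ?_
  refine (Finset.card_biUnion_le).trans ?_
  have hbound : ∀ T ∈ Finset.powersetCard t (Finset.univ : Finset (Fin n)),
      (Finset.univ.filter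
        (fun G : SimpleGraph (Fin n) => ∀ v ∈ T, v ∉ Y ∧ (nonNbrs G v Y).card ≤ m)).card
      ≤ (∑ k ∈ Finset.range (m+1), Y.card.choose k)^t * 2^(n.choose 2 - t * Y.card) := by
    intro T hT
    rw [Finset.mem_powersetCard] at hT
    by_cases hTY : ∀ v ∈ T, v ∉ Y
    · have h1 : (Finset.univ.filter
          (fun G : SimpleGraph (Fin n) => ∀ v ∈ T, v ∉ Y ∧ (nonNbrs G v Y).card ≤ m))
          ⊆ (Finset.univ.filter
            (fun G : SimpleGraph (Fin n) => ∀ v ∈ T, (nonNbrs G v Y).card ≤ m)) := by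
        exact Finset.monotone_filter_right _ (fun G _ hG v hv => (hG v hv).2)
      refine (Finset.card_le_card h1).trans ?_
      have := count_main Y T m hTY
      rwa [hT.2] at this
    · push_neg at hTY
      obtain ⟨v, hvT, hvY⟩ := hTY
      have : (Finset.univ.filter
          (fun G : SimpleGraph (Fin n) => ∀ v ∈ T, v ∉ Y ∧ (nonNbrs G v Y).card ≤ m)) = ∅ := by
        rw [Finset.filter_eq_empty_iff]
        intro G _ hG
        exact (hG v hvT).1 hvY
      rw [this]
      simp
  refine (Finset.sum_le_sum hbound).trans ?_
  rw [Finset.sum_const, Finset.card_powersetCard, Finset.card_univ, Fintype.card_fin,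
    smul_eq_mul]

lemma binom_tail_le (y m : ℕ) (α ε : ℝ) (hα0 : 0 < α) (hα1 : α < 1/2)
    (hm : (m : ℝ) ≤ α * y) (hent : |α * Real.log α + (1-α) * Real.log (1-α)| < ε) :
    ((∑ k ∈ Finset.range (m+1), y.choose k : ℕ) : ℝ) ≤ Real.exp (ε * y) := by
  have h1α : 0 < 1 - α := by linarith
  set E := α * Real.log α + (1-α) * Real.log (1-α) with hE
  have hlogα : Real.log α < 0 := Real.log_neg hα0 (by linarith)
  have hlog1α : Real.log (1-α) ≤ 0 := Real.log_nonpos (by linarith) (by linarith)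
  have hE0 : E ≤ 0 := by
    have := mul_nonneg hα0.le (neg_nonneg.mpr hlogα.le)
    nlinarith [mul_nonneg h1α.le (neg_nonneg.mpr hlog1α)]
  have hEε : -E < ε := by
    rw [abs_of_nonpos hE0] at hent; exact hent
  rcases Nat.eq_zero_or_pos y with hy | hy
  · subst hy
    have hm0 : m = 0 := by
      have : (m:ℝ) ≤ 0 := by simpa using hm
      exact_mod_cast le_antisymm (by exact_mod_cast this) (Nat.zero_le m)
    subst hm0
    have hε0 : 0 ≤ ε * ((0:ℕ):ℝ) := by simp
    have h1 : (∑ k ∈ Finset.range (0+1), Nat.choose 0 k) = 1 := by simp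
    rw [h1, Nat.cast_one]
    exact Real.one_le_exp hε0
  have hyR : (0:ℝ) < y := by exact_mod_cast hy
  have hmy : m < y := by
    have : (m:ℝ) < y := lt_of_le_of_lt hm (by nlinarith)
    exact_mod_cast this
  have hlogle : Real.log α ≤ Real.log (1-α) := by
    apply Real.log_le_log hα0; linarith
  set A := Real.exp (y * E) with hA
  have hA0 : 0 < A := Real.exp_pos _
  have claim : ∀ k ∈ Finset.range (m+1), A ≤ α^k * (1-α)^(y-k) := by
    intro k hk
    rw [Finset.mem_range, Nat.lt_succ_iff] at hk
    have hky : k ≤ y := le_of_lt (lt_of_le_of_lt hk hmy)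
    have hkR : (k:ℝ) ≤ α * y := le_trans (by exact_mod_cast hk) hm
    have hcast : ((y - k : ℕ) : ℝ) = (y:ℝ) - k := by
      rw [Nat.cast_sub hky]
    have e1 : Real.exp ((k:ℝ) * Real.log α) = α ^ k := by
      rw [Real.exp_nat_mul, Real.exp_log hα0]
    have e2 : Real.exp (((y - k : ℕ):ℝ) * Real.log (1-α)) = (1-α) ^ (y-k) := by
      rw [Real.exp_nat_mul, Real.exp_log h1α]
    have hrhs : α^k * (1-α)^(y-k)
        = Real.exp (k * Real.log α + ((y:ℝ) - k) * Real.log (1-α)) := by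
      rw [Real.exp_add, ← hcast, e1, e2]
    rw [hrhs, hA]
    apply Real.exp_le_exp.mpr
    have h1 : (α*y - k) * Real.log α ≤ (α*y - k) * Real.log (1-α) :=
      mul_le_mul_of_nonneg_left hlogle (by linarith)
    rw [hE]
    nlinarith [h1]
  have hsum1 : (∑ k ∈ Finset.range (m+1), (y.choose k : ℝ)) * A
      ≤ ∑ k ∈ Finset.range (y+1), α^k * (1-α)^(y-k) * (y.choose k) := by
    rw [Finset.sum_mul]
    refine le_trans (Finset.sum_le_sum (fun k hk => ?_))
      (Finset.sum_le_sum_of_subset_of_nonneg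
        (Finset.range_subset_range.mpr (by omega)) (fun k _ _ => by positivity))
    calc (y.choose k : ℝ) * A ≤ (y.choose k : ℝ) * (α^k * (1-α)^(y-k)) := by
          exact mul_le_mul_of_nonneg_left (claim k hk) (by positivity)
      _ = α^k * (1-α)^(y-k) * (y.choose k) := by ring
  have hbinom : (∑ k ∈ Finset.range (y+1), α^k * (1-α)^(y-k) * (y.choose k)) = 1 := by
    rw [← add_pow]
    norm_num
  rw [hbinom] at hsum1
  have hS : (∑ k ∈ Finset.range (m+1), (y.choose k : ℝ)) ≤ A⁻¹ := by
    rw [← one_div]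
    exact (le_div_iff₀ hA0).mpr hsum1
  have hAinv : A⁻¹ = Real.exp (-((y:ℝ) * E)) := by rw [hA, ← Real.exp_neg]
  have hexp : Real.exp (-((y:ℝ) * E)) ≤ Real.exp (ε * y) := by
    apply Real.exp_le_exp.mpr
    nlinarith [hyR.le]
  push_cast
  calc (∑ k ∈ Finset.range (m+1), (y.choose k : ℝ)) ≤ A⁻¹ := hS
    _ = Real.exp (-((y:ℝ) * E)) := hAinv
    _ ≤ Real.exp (ε * y) := hexp

lemma final_arith (ε l L lg y t : ℝ)
    (hε : 0 < ε) (hε1 : ε ≤ 1/100)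
    (hl1 : 0.69314 < l) (hl2 : l < 0.69315)
    (hL : 1 ≤ L) (hlg : 3 ≤ lg) (hy : (15/ε) * lg ≤ y)
    (ht1 : (1/l + 3*ε) * L ≤ t) :
    t * lg + t * (ε * y) - (t * y) * l ≤ -(1 + ε/2) * y * L := by
  have hl0 : (0:ℝ) < l := by linarith
  have hinv : 1/l ≤ 1.4428 := by
    rw [div_le_iff₀ hl0]; nlinarith
  set x := 1/l + 3*ε with hx
  clear_value x
  have hx0 : 0 < x := by rw [hx]; positivity
  have hxup : x ≤ 1.4728 := by rw [hx]; linarith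
  have hy0 : 0 < y := by
    have : 0 < (15/ε) * lg := by positivity
    linarith
  have hylg : 1500 * lg ≤ y := by
    have h15 : (1500:ℝ) ≤ 15/ε := by
      rw [le_div_iff₀ hε]; nlinarith
    nlinarith
  have hB0 : 0 ≤ y * (l - ε) - lg := by nlinarith
  have ht0 : 0 < t := lt_of_lt_of_le (by positivity) ht1
  -- key: x * (y*(l-ε) - lg) ≥ (1 + ε/2) * y
  have hxl : 1 + (0.6:ℝ)*ε ≤ x * (l - ε) := by
    have h1 : (1/l) * l = 1 := by field_simp
    have h2 : (1/l) * ε ≤ 1.4428 * ε := by nlinarith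
    have h3 : x * (l - ε) = 1 - (1/l)*ε + 3*ε*l - 3*ε*ε := by
      rw [hx]; field_simp; ring
    have h2b : 3*ε*0.69314 ≤ 3*ε*l := by nlinarith
    have h2c : 3*ε*ε ≤ 0.03*ε := by nlinarith
    linarith
  have hlg0 : (0:ℝ) ≤ lg := by linarith
  have hkey : (1 + ε/2) * y ≤ x * (y*(l-ε) - lg) := by
    have h4 : (1 + 0.6*ε) * y ≤ x * (l - ε) * y :=
      mul_le_mul_of_nonneg_right hxl hy0.le
    have h5 : x * lg ≤ 1.4728 * lg := mul_le_mul_of_nonneg_right hxup hlg0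
    have h6 : 1.4728 * lg ≤ 0.1 * ε * y := by
      have h6e : 0.1 * ε * ((15/ε) * lg) = 1.5 * lg := by field_simp; ring
      have h6a : 0.1 * ε * ((15/ε) * lg) ≤ 0.1 * ε * y :=
        mul_le_mul_of_nonneg_left hy (by positivity)
      linarith
    have hring : x * (y*(l-ε) - lg) = x*(l-ε)*y - x*lg := by ring
    rw [hring]
    linarith
  -- multiply by L and use t ≥ x L
  have hmain : (1 + ε/2) * y * L ≤ t * (y*(l-ε) - lg) := by
    have h7 : x * L * (y*(l-ε) - lg) ≤ t * (y*(l-ε) - lg) :=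
      mul_le_mul_of_nonneg_right ht1 hB0
    have h8 : (1 + ε/2) * y * L ≤ x * (y*(l-ε) - lg) * L :=
      mul_le_mul_of_nonneg_right hkey (by linarith)
    have hring2 : x * (y*(l-ε) - lg) * L = x * L * (y*(l-ε) - lg) := by ring
    linarith [hring2 ▸ h8]
  have hexp : t * (y*(l-ε) - lg) = t*y*l - t*(ε*y) - t*lg := by ring
  rw [hexp] at hmain
  linarith


set_option maxHeartbeats 4000000 in
/-- for sufficiently small `ε > 0`, `α ∈ (0,1/2)` with
`|α ln α + (1−α) ln(1−α)| < ε`, `t₂ = ⌊(1/ln 2 + 3ε)·ln ln n⌋`, `n` large and any fixed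
`Y` with `|Y| = y ≥ (ln n)^{2+3ε}√n`, the probability that more than `t₂` vertices
`v ∉ Y` satisfy `|N₀(v,Y)| ≤ α y` is at most `e^{−(1+ε/2)·y·ln ln n}`. -/
theorem statement8 :
    ∃ ε₀ : ℝ, 0 < ε₀ ∧ ∀ ε : ℝ, 0 < ε → ε < ε₀ →
      ∀ α : ℝ, α ∈ Set.Ioo (0:ℝ) (1/2) →
        |α * Real.log α + (1 - α) * Real.log (1 - α)| < ε →
      ∃ n₀ : ℕ, ∀ n : ℕ, n₀ ≤ n → ∀ Y : Finset (Fin n),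
        Real.log n ^ ((2:ℝ) + 3*ε) * Real.sqrt n ≤ (Y.card : ℝ) →
        gnp n (1/2) {G : SimpleGraph (Fin n) |
          ⌊(1/Real.log 2 + 3*ε) * Real.log (Real.log n)⌋₊ <
            (Finset.univ.filter (fun v : Fin n =>
              v ∉ Y ∧ ((nonNbrs G v Y).card : ℝ) ≤ α * Y.card)).card}
        ≤ ENNReal.ofReal (Real.exp (-(1 + ε/2) * Y.card * Real.log (Real.log n))) := by
  refine ⟨1/100, by norm_num, ?_⟩
  intro ε hε hε₀ α hα hent
  obtain ⟨hα0, hα1⟩ := hα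
  have hε1 : ε ≤ 1/100 := le_of_lt hε₀
  -- eventual conditions on n
  have t1 : Tendsto (fun n : ℕ => Real.log n) atTop atTop :=
    Real.tendsto_log_atTop.comp tendsto_natCast_atTop_atTop
  have t2 : Tendsto (fun n : ℕ => Real.log (Real.log n)) atTop atTop :=
    Real.tendsto_log_atTop.comp t1
  have e1 := t1.eventually_ge_atTop 3
  have e2 := t2.eventually_ge_atTop 1
  have e3 : ∀ᶠ n : ℕ in atTop, (15/ε) * Real.log n ≤ Real.sqrt n := by
    have hc : (0:ℝ) < ε/15 := by positivity
    have h := (isLittleO_log_rpow_atTop (by norm_num : (0:ℝ) < 1/2)).def hc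
    have h' := tendsto_natCast_atTop_atTop.eventually h
    filter_upwards [h', e1] with n hn hlog
    have hn0 : (0:ℝ) ≤ (n:ℝ) := Nat.cast_nonneg n
    have hrw : ((n:ℝ) ^ ((1:ℝ)/2)) = Real.sqrt n := (Real.sqrt_eq_rpow _).symm
    rw [Real.norm_eq_abs, Real.norm_eq_abs, abs_of_nonneg (by linarith : (0:ℝ) ≤ Real.log n),
      abs_of_nonneg (Real.rpow_nonneg hn0 _), hrw] at hn
    calc (15/ε) * Real.log n ≤ (15/ε) * (ε/15 * Real.sqrt n) :=
          mul_le_mul_of_nonneg_left hn (by positivity)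
      _ = Real.sqrt n := by field_simp
  have e4 : ∀ᶠ n : ℕ in atTop, 6 * Real.log n + 1 ≤ (n:ℝ) := by
    have hc : (0:ℝ) < 1/12 := by norm_num
    have h := Real.isLittleO_log_id_atTop.def hc
    have h' := tendsto_natCast_atTop_atTop.eventually h
    have e5 := tendsto_natCast_atTop_atTop.eventually_ge_atTop (3:ℝ)
    filter_upwards [h', e1, e5] with n hn hlog hn3
    simp only [id_eq, Real.norm_eq_abs] at hn
    rw [abs_of_nonneg (by linarith : (0:ℝ) ≤ Real.log n),
      abs_of_nonneg (by positivity : (0:ℝ) ≤ (n:ℝ))] at hn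
    linarith
  obtain ⟨n₀, hn₀⟩ := eventually_atTop.mp ((e1.and (e2.and (e3.and e4))))
  refine ⟨n₀, ?_⟩
  intro n hn Y hY
  obtain ⟨hlg3, hL1, hE3, hE4⟩ := hn₀ n hn
  have hlg0 : (0:ℝ) ≤ Real.log n := by linarith
  have hLpos : (0:ℝ) < Real.log (Real.log n) := by linarith
  have hnnat : 1 ≤ n := by
    by_contra h
    push_neg at h
    interval_cases n
    simp only [Nat.cast_zero, Real.log_zero] at hlg3
    linarith
  have hn0R : (0:ℝ) < n := by exact_mod_cast hnnat
  -- y bounds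
  have hrpow1 : 1 ≤ Real.log n ^ ((2:ℝ) + 3*ε) :=
    Real.one_le_rpow (by linarith) (by linarith)
  have hsqrty : Real.sqrt n ≤ (Y.card:ℝ) := by
    have h1 : (1:ℝ) * Real.sqrt n ≤ Real.log n ^ ((2:ℝ) + 3*ε) * Real.sqrt n :=
      mul_le_mul_of_nonneg_right hrpow1 (Real.sqrt_nonneg _)
    rw [one_mul] at h1
    exact le_trans h1 hY
  have hy_lg : (15/ε) * Real.log n ≤ (Y.card:ℝ) := le_trans hE3 hsqrty
  have hy0R : (0:ℝ) < Y.card := lt_of_lt_of_le (by positivity) hy_lg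
  have hy0 : 0 < Y.card := by exact_mod_cast hy0R
  have hynn : Y.card ≤ n := by simpa using Finset.card_le_univ Y
  have hyn : (Y.card:ℝ) ≤ n := by exact_mod_cast hynn
  -- log 2 bounds
  have hl1 : (0.69314:ℝ) < Real.log 2 := lt_trans (by norm_num) Real.log_two_gt_d9
  have hl2 : Real.log 2 < 0.69315 := lt_trans Real.log_two_lt_d9 (by norm_num)
  have hl0 : (0:ℝ) < Real.log 2 := by linarith
  set m := ⌊α * (Y.card:ℝ)⌋₊ with hm_def
  set t := ⌊(1/Real.log 2 + 3*ε) * Real.log (Real.log n)⌋₊ + 1 with ht_def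
  clear_value m t
  have hαy0 : (0:ℝ) ≤ α * Y.card := by positivity
  have hm : (m:ℝ) ≤ α * Y.card := by rw [hm_def]; exact Nat.floor_le hαy0
  have hxnn : (0:ℝ) ≤ (1/Real.log 2 + 3*ε) * Real.log (Real.log n) := by positivity
  have ht_low : (1/Real.log 2 + 3*ε) * Real.log (Real.log n) ≤ (t:ℝ) := by
    have h := Nat.lt_floor_add_one ((1/Real.log 2 + 3*ε) * Real.log (Real.log n))
    rw [ht_def]
    push_cast
    linarith
  have hinv : 1/Real.log 2 ≤ 1.4428 := by rw [div_le_iff₀ hl0]; nlinarith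
  have ht_up : (t:ℝ) ≤ 2.5 * Real.log (Real.log n) := by
    have h := Nat.floor_le hxnn
    rw [ht_def]
    push_cast
    nlinarith
  have ht_pos : (0:ℝ) < t := lt_of_lt_of_le (by positivity) ht_low
  -- t * y ≤ C(n,2)
  have hLlg : Real.log (Real.log n) ≤ Real.log n := Real.log_le_self hlg0
  have htyC : t * Y.card ≤ n.choose 2 := by
    have hc2 : ((n.choose 2 : ℕ):ℝ) = (n:ℝ) * ((n:ℝ) - 1) / 2 := Nat.cast_choose_two (K := ℝ) n
    have h1 : ((t * Y.card : ℕ):ℝ) ≤ (n:ℝ) * ((n:ℝ) - 1) / 2 := by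
      have ha : (t:ℝ)*(Y.card:ℝ) ≤ 2.5 * Real.log (Real.log n) * (Y.card:ℝ) :=
        mul_le_mul_of_nonneg_right ht_up hy0R.le
      have hb : 2.5 * Real.log (Real.log n) * (Y.card:ℝ)
          ≤ 2.5 * Real.log (Real.log n) * (n:ℝ) :=
        mul_le_mul_of_nonneg_left hyn (by positivity)
      have hc3 : 5 * Real.log (Real.log n) ≤ (n:ℝ) - 1 := by linarith
      have hd : 2.5 * Real.log (Real.log n) * (n:ℝ) ≤ (n:ℝ) * ((n:ℝ) - 1) / 2 := by
        nlinarith [mul_nonneg hn0R.le (sub_nonneg.mpr hc3)]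
      push_cast
      linarith
    rw [← hc2] at h1
    exact_mod_cast h1
  -- rewrite the event
  have hsetv : ∀ G : SimpleGraph (Fin n),
      (Finset.univ.filter (fun v : Fin n =>
        v ∉ Y ∧ ((nonNbrs G v Y).card : ℝ) ≤ α * Y.card))
      = (Finset.univ.filter (fun v : Fin n => v ∉ Y ∧ (nonNbrs G v Y).card ≤ m)) := by
    intro G
    ext v
    simp only [Finset.mem_filter]
    constructor
    · rintro ⟨hu, hv, hc⟩
      exact ⟨hu, hv, hm_def ▸ Nat.le_floor hc⟩
    · rintro ⟨hu, hv, hc⟩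
      refine ⟨hu, hv, le_trans ?_ hm⟩
      exact_mod_cast Nat.cast_le.mpr hc
  have hsetS : {G : SimpleGraph (Fin n) |
        ⌊(1/Real.log 2 + 3*ε) * Real.log (Real.log n)⌋₊ <
          (Finset.univ.filter (fun v : Fin n =>
            v ∉ Y ∧ ((nonNbrs G v Y).card : ℝ) ≤ α * Y.card)).card}
      = {G : SimpleGraph (Fin n) |
          t ≤ (Finset.univ.filter
            (fun v : Fin n => v ∉ Y ∧ (nonNbrs G v Y).card ≤ m)).card} := by
    ext G
    simp only [Set.mem_setOf_eq, hsetv G, ht_def]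
    exact (Nat.add_one_le_iff).symm
  rw [hsetS, gnp_half_apply]
  -- counting bound
  set B : ℕ := ∑ k ∈ Finset.range (m+1), Y.card.choose k with hB_def
  have hcount : (Finset.univ.filter (· ∈ {G : SimpleGraph (Fin n) |
      t ≤ (Finset.univ.filter
        (fun v : Fin n => v ∉ Y ∧ (nonNbrs G v Y).card ≤ m)).card})).card
      ≤ n.choose t * (B^t * 2^(n.choose 2 - t * Y.card)) := by
    have heq : (Finset.univ.filter (· ∈ {G : SimpleGraph (Fin n) |
        t ≤ (Finset.univ.filter
          (fun v : Fin n => v ∉ Y ∧ (nonNbrs G v Y).card ≤ m)).card}))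
        = (Finset.univ.filter (fun G : SimpleGraph (Fin n) =>
          t ≤ (Finset.univ.filter
            (fun v : Fin n => v ∉ Y ∧ (nonNbrs G v Y).card ≤ m)).card)) := by
      apply Finset.filter_congr
      intro G _
      simp [Set.mem_setOf_eq]
    rw [heq, hB_def]
    exact count_event Y m t
  -- the real-number bound
  have hB : (B:ℝ) ≤ Real.exp (ε * Y.card) := by
    rw [hB_def]
    exact_mod_cast binom_tail_le Y.card m α ε hα0 hα1 hm hent
  have hreal : ((n.choose t * (B^t * 2^(n.choose 2 - t * Y.card)) : ℕ):ℝ)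
      * (1/2:ℝ)^(n.choose 2)
      ≤ Real.exp (-(1 + ε/2) * Y.card * Real.log (Real.log n)) := by
    have h2ty : (2:ℝ)^(n.choose 2 - t*Y.card) * (1/2:ℝ)^(n.choose 2)
        = ((2:ℝ)^(t*Y.card))⁻¹ := by
      rw [pow_sub₀ (2:ℝ) two_ne_zero htyC, one_div, inv_pow]
      have h2C : ((2:ℝ)^(n.choose 2)) ≠ 0 := by positivity
      field_simp
    have hstep1 : ((n.choose t : ℕ):ℝ) ≤ (n:ℝ)^t := by
      have h := Nat.choose_le_pow_div (α := ℝ) t n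
      have hfac : (1:ℝ) ≤ (t.factorial : ℝ) := by
        exact_mod_cast Nat.one_le_iff_ne_zero.mpr (Nat.factorial_ne_zero t)
      calc ((n.choose t : ℕ):ℝ) ≤ ((n:ℝ)^t) / (t.factorial : ℝ) := by
            exact_mod_cast h
        _ ≤ (n:ℝ)^t := by
            apply div_le_self (by positivity) hfac
    have hstep2 : ((B:ℕ):ℝ)^t ≤ (Real.exp (ε * Y.card))^t :=
      pow_le_pow_left₀ (by positivity) hB t
    have hprod : ((n.choose t : ℕ):ℝ) * (((B:ℕ):ℝ)^t * (2:ℝ)^(n.choose 2 - t*Y.card))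
        * (1/2:ℝ)^(n.choose 2)
        ≤ ((n:ℝ)^t * (Real.exp (ε * Y.card))^t) * ((2:ℝ)^(t*Y.card))⁻¹ := by
      calc ((n.choose t : ℕ):ℝ) * (((B:ℕ):ℝ)^t * (2:ℝ)^(n.choose 2 - t*Y.card))
            * (1/2:ℝ)^(n.choose 2)
          = (((n.choose t : ℕ):ℝ) * ((B:ℕ):ℝ)^t)
            * ((2:ℝ)^(n.choose 2 - t*Y.card) * (1/2:ℝ)^(n.choose 2)) := by ring
        _ ≤ ((n:ℝ)^t * (Real.exp (ε * Y.card))^t) * ((2:ℝ)^(t*Y.card))⁻¹ := by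
            rw [h2ty]
            apply mul_le_mul_of_nonneg_right _ (by positivity)
            exact mul_le_mul hstep1 hstep2 (by positivity) (by positivity)
    have hexp_n : (n:ℝ)^t = Real.exp ((t:ℝ) * Real.log n) := by
      rw [Real.exp_nat_mul, Real.exp_log hn0R]
    have hexp_B : (Real.exp (ε * Y.card))^t = Real.exp ((t:ℝ) * (ε * Y.card)) := by
      rw [Real.exp_nat_mul]
    have hexp_2 : (2:ℝ)^(t*Y.card) = Real.exp (((t*Y.card : ℕ):ℝ) * Real.log 2) := by
      rw [Real.exp_nat_mul, Real.exp_log (by norm_num : (0:ℝ) < 2)]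
    have harith := final_arith ε (Real.log 2) (Real.log (Real.log n)) (Real.log n)
      (Y.card:ℝ) (t:ℝ) hε hε1 hl1 hl2 hL1 hlg3 hy_lg ht_low
    have hfin : ((n:ℝ)^t * (Real.exp (ε * Y.card))^t) * ((2:ℝ)^(t*Y.card))⁻¹
        ≤ Real.exp (-(1 + ε/2) * Y.card * Real.log (Real.log n)) := by
      rw [hexp_n, hexp_B, hexp_2, ← Real.exp_neg, ← Real.exp_add, ← Real.exp_add]
      apply Real.exp_le_exp.mpr
      push_cast
      calc (t:ℝ) * Real.log n + (t:ℝ) * (ε * Y.card) + -((t:ℝ) * (Y.card:ℝ) * Real.log 2)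
          = (t:ℝ) * Real.log n + (t:ℝ) * (ε * Y.card)
            - ((t:ℝ) * (Y.card:ℝ)) * Real.log 2 := by ring
        _ ≤ -(1 + ε/2) * Y.card * Real.log (Real.log n) := harith
    calc ((n.choose t * (B^t * 2^(n.choose 2 - t * Y.card)) : ℕ):ℝ) * (1/2:ℝ)^(n.choose 2)
        = ((n.choose t : ℕ):ℝ) * (((B:ℕ):ℝ)^t * (2:ℝ)^(n.choose 2 - t*Y.card))
          * (1/2:ℝ)^(n.choose 2) := by push_cast; ring
      _ ≤ ((n:ℝ)^t * (Real.exp (ε * Y.card))^t) * ((2:ℝ)^(t*Y.card))⁻¹ := hprod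
      _ ≤ Real.exp (-(1 + ε/2) * Y.card * Real.log (Real.log n)) := hfin
  -- combine in ℝ≥0∞
  refine le_trans ?_ (ENNReal.ofReal_le_ofReal hreal)
  rw [ENNReal.ofReal_mul (Nat.cast_nonneg _), ENNReal.ofReal_natCast]
  refine mul_le_mul_left (Nat.cast_le.mpr ?_) _
  convert hcount using 2
  exact Finset.filter_congr_decidable _ _ _

end
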